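/- Let k be a field. The k-bilinear multiplication on the free k-module with basis G (i.e., on finitely supported functions G →₀ k) determined on basis elements by g · h = gh if ℓ(gh) = ℓ(g) + ℓ(h) and g · h = 0 if ℓ(gh) < ℓ(g) + ℓ(h), is associative, and the basis element e is a two-sided unit for it. (Thus the Hasse algebra H_G(Re) of Definition 2.3(1') is a well-defined associative unital k-algebra.) -/

import Mathlib

/-- The length of `g ∈ G` with respect to a generating set `Re`:
the smallest `n` such that `g` is a product of `n` elements of `Re`. -/
noncomputable def wordLength {G : Type*} [Group G] (Re : Set G) (g : G) : ℕ :=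
  sInf {n : ℕ | ∃ l : List G, (∀ x ∈ l, x ∈ Re) ∧ l.length = n ∧ l.prod = g}

/-- The multiplication of the Hasse algebra `H_G(Re)`: the `k`-bilinear extension
to the free `k`-module on `G` of the rule `g · h = gh` if `ℓ(gh) = ℓ(g) + ℓ(h)`
and `g · h = 0` otherwise. -/
noncomputable def hasseMul {G : Type*} [Group G] (Re : Set G)
    {k : Type*} [Field k] (x y : G →₀ k) : G →₀ k :=
  x.sum fun g a => y.sum fun h b =>
    if wordLength Re (g * h) = wordLength Re g + wordLength Re h then
      Finsupp.single (g * h) (a * b)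
    else 0

section Aux

variable {G : Type*} [Group G] (Re : Set G)

lemma exists_list_of_gen [Finite G] (hgen : Subgroup.closure Re = ⊤) (g : G) :
    ∃ l : List G, (∀ x ∈ l, x ∈ Re) ∧ l.prod = g := by
  have hg : g ∈ Submonoid.closure Re := by
    have hmem : g ∈ Subgroup.closure Re := by rw [hgen]; trivial
    refine Subgroup.closure_induction (fun x hx => Submonoid.subset_closure hx)
      (Submonoid.one_mem _) (fun x y _ _ hx hy => Submonoid.mul_mem _ hx hy)
      (fun x _ hx => ?_) hmem
    have hpos : 0 < orderOf x := orderOf_pos x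
    have h1 : x ^ (orderOf x - 1) * x = 1 := by
      rw [← pow_succ, Nat.sub_add_cancel hpos, pow_orderOf_eq_one]
    have h2 : x ^ (orderOf x - 1) = x⁻¹ := eq_inv_of_mul_eq_one_left h1
    rw [← h2]
    exact pow_mem hx _
  exact Submonoid.exists_list_of_mem_closure hg

lemma wordSet_nonempty [Finite G] (hgen : Subgroup.closure Re = ⊤) (g : G) :
    {n : ℕ | ∃ l : List G, (∀ x ∈ l, x ∈ Re) ∧ l.length = n ∧ l.prod = g}.Nonempty := by
  obtain ⟨l, h1, h2⟩ := exists_list_of_gen Re hgen g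
  exact ⟨l.length, l, h1, rfl, h2⟩

lemma wordLength_le (g : G) (l : List G) (h1 : ∀ x ∈ l, x ∈ Re) (h2 : l.prod = g) :
    wordLength Re g ≤ l.length :=
  Nat.sInf_le ⟨l, h1, rfl, h2⟩

lemma wordLength_spec [Finite G] (hgen : Subgroup.closure Re = ⊤) (g : G) :
    ∃ l : List G, (∀ x ∈ l, x ∈ Re) ∧ l.length = wordLength Re g ∧ l.prod = g :=
  Nat.sInf_mem (wordSet_nonempty Re hgen g)

lemma wordLength_one : wordLength Re 1 = 0 :=
  Nat.le_zero.mp (by simpa using wordLength_le Re 1 [] (by simp) (by simp))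

lemma wordLength_subadd [Finite G] (hgen : Subgroup.closure Re = ⊤) (g h : G) :
    wordLength Re (g * h) ≤ wordLength Re g + wordLength Re h := by
  obtain ⟨lg, hg1, hg2, hg3⟩ := wordLength_spec Re hgen g
  obtain ⟨lh, hh1, hh2, hh3⟩ := wordLength_spec Re hgen h
  have := wordLength_le Re (g * h) (lg ++ lh)
    (fun x hx => by rcases List.mem_append.mp hx with h' | h' <;> [exact hg1 x h'; exact hh1 x h'])
    (by rw [List.prod_append, hg3, hh3])
  simpa [hg2, hh2] using this

lemma cond_iff [Finite G] (hgen : Subgroup.closure Re = ⊤) (g h i : G) :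
    (wordLength Re (g * h) = wordLength Re g + wordLength Re h ∧
      wordLength Re (g * h * i) = wordLength Re (g * h) + wordLength Re i) ↔
    (wordLength Re (h * i) = wordLength Re h + wordLength Re i ∧
      wordLength Re (g * (h * i)) = wordLength Re g + wordLength Re (h * i)) := by
  have e : g * h * i = g * (h * i) := mul_assoc g h i
  have s1 := wordLength_subadd Re hgen (g * h) i
  have s2 := wordLength_subadd Re hgen g h
  have s3 := wordLength_subadd Re hgen h i
  have s4 := wordLength_subadd Re hgen g (h * i)
  rw [e] at s1
  constructor
  · rintro ⟨h1, h2⟩; rw [e] at h2; omega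
  · rintro ⟨h1, h2⟩; rw [e]; omega

variable {k : Type*} [Field k]

lemma hasseMul_single_single (g h : G) (a b : k) :
    hasseMul Re (Finsupp.single g a) (Finsupp.single h b)
      = if wordLength Re (g * h) = wordLength Re g + wordLength Re h then
          Finsupp.single (g * h) (a * b)
        else 0 := by
  classical
  unfold hasseMul
  rw [Finsupp.sum_single_index
        (by rw [Finsupp.sum_single_index (by split <;> simp)]; split <;> simp),
      Finsupp.sum_single_index (by split <;> simp)]

lemma hasseMul_zero_left (y : G →₀ k) : hasseMul Re 0 y = 0 := by
  simp [hasseMul]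

lemma hasseMul_zero_right (x : G →₀ k) : hasseMul Re x 0 = 0 := by
  simp [hasseMul]

lemma hasseMul_add_left (x x' y : G →₀ k) :
    hasseMul Re (x + x') y = hasseMul Re x y + hasseMul Re x' y := by
  classical
  unfold hasseMul
  rw [Finsupp.sum_add_index]
  · intro g _; simp
  · intro g _ a a'
    rw [← Finsupp.sum_add]
    congr 1; funext h b
    split <;> simp [add_mul, Finsupp.single_add]

lemma hasseMul_add_right (x y y' : G →₀ k) :
    hasseMul Re x (y + y') = hasseMul Re x y + hasseMul Re x y' := by
  classical
  unfold hasseMul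
  rw [← Finsupp.sum_add]
  congr 1; funext g a
  rw [Finsupp.sum_add_index]
  · intro h _; split <;> simp
  · intro h _ b b'
    split <;> simp [mul_add, Finsupp.single_add]

end Aux

/-- The Hasse algebra multiplication is given on basis elements by the stated rule,
is associative, and the basis element `e` is a two-sided unit for it: the Hasse
algebra `H_G(Re)` is a well-defined associative unital `k`-algebra. -/
theorem hasseMul_assoc_one
    {G : Type*} [Group G] [Finite G] (Re : Set G)
    (hgen : Subgroup.closure Re = ⊤) (hne : (1 : G) ∉ Re)
    (k : Type*) [Field k] :
    (∀ g h : G, hasseMul Re (Finsupp.single g (1 : k)) (Finsupp.single h (1 : k))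
      = if wordLength Re (g * h) = wordLength Re g + wordLength Re h then
          Finsupp.single (g * h) (1 : k)
        else 0) ∧
    (∀ x y z : G →₀ k, hasseMul Re (hasseMul Re x y) z
      = hasseMul Re x (hasseMul Re y z)) ∧
    (∀ x : G →₀ k, hasseMul Re (Finsupp.single (1 : G) (1 : k)) x = x) ∧
    (∀ x : G →₀ k, hasseMul Re x (Finsupp.single (1 : G) (1 : k)) = x) := by
  classical
  refine ⟨fun g h => by rw [hasseMul_single_single]; simp, ?_, ?_, ?_⟩
  · -- associativity
    intro x y z
    induction x using Finsupp.induction_linear with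
    | zero => simp [hasseMul_zero_left]
    | add f f' hf hf' =>
        simp [hasseMul_add_left, hf, hf']
    | single g a =>
      induction y using Finsupp.induction_linear with
      | zero => simp [hasseMul_zero_left, hasseMul_zero_right]
      | add f f' hf hf' =>
          simp [hasseMul_add_left, hasseMul_add_right, hf, hf']
      | single h b =>
        induction z using Finsupp.induction_linear with
        | zero => simp [hasseMul_zero_right]
        | add f f' hf hf' =>
            simp [hasseMul_add_right, hf, hf']
        | single i c =>
          rw [hasseMul_single_single, hasseMul_single_single]
          have hiff := cond_iff Re hgen g h i
          by_cases c1 : wordLength Re (g * h) = wordLength Re g + wordLength Re h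
          · rw [if_pos c1, hasseMul_single_single]
            by_cases c2 : wordLength Re (g * h * i)
                = wordLength Re (g * h) + wordLength Re i
            · have ⟨c3, c4⟩ := hiff.mp ⟨c1, c2⟩
              rw [if_pos c2, if_pos c3, hasseMul_single_single, if_pos c4,
                mul_assoc g h i, mul_assoc a b c]
            · rw [if_neg c2]
              by_cases c3 : wordLength Re (h * i) = wordLength Re h + wordLength Re i
              · rw [if_pos c3, hasseMul_single_single]
                have c4 : ¬ wordLength Re (g * (h * i))
                    = wordLength Re g + wordLength Re (h * i) := fun hc =>
                  c2 (hiff.mpr ⟨c3, hc⟩).2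
                rw [if_neg c4]
              · rw [if_neg c3, hasseMul_zero_right]
          · rw [if_neg c1, hasseMul_zero_left]
            by_cases c3 : wordLength Re (h * i) = wordLength Re h + wordLength Re i
            · rw [if_pos c3, hasseMul_single_single]
              have c4 : ¬ wordLength Re (g * (h * i))
                  = wordLength Re g + wordLength Re (h * i) := fun hc =>
                c1 (hiff.mpr ⟨c3, hc⟩).1
              rw [if_neg c4]
            · rw [if_neg c3, hasseMul_zero_right]
  · -- left unit
    intro x
    induction x using Finsupp.induction_linear with
    | zero => simp [hasseMul_zero_right]
    | add f f' hf hf' => simp [hasseMul_add_right, hf, hf']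
    | single g a =>
        rw [hasseMul_single_single]
        simp [wordLength_one]
  · -- right unit
    intro x
    induction x using Finsupp.induction_linear with
    | zero => simp [hasseMul_zero_left]
    | add f f' hf hf' => simp [hasseMul_add_left, hf, hf']
    | single g a =>
        rw [hasseMul_single_single]
        simp [wordLength_one]
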